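/- Let n, t be natural numbers, ρ > 0 a real number, Φ a real t×n matrix, and u ∈ ℝ^n. Then the matrices Φ Φᵀ + ρ·I_t and Φᵀ Φ + ρ·I_n are invertible, and ‖u‖² − (Φu)ᵀ (Φ Φᵀ + ρ·I_t)⁻¹ (Φu) = ρ · uᵀ (Φᵀ Φ + ρ·I_n)⁻¹ u. -/

import Mathlib

open Matrix

lemma smul_one_posDef {m : Type*} [Fintype m] [DecidableEq m] {ρ : ℝ} (hρ : 0 < ρ) :
    Matrix.PosDef (ρ • (1 : Matrix m m ℝ)) := by
  refine Matrix.posDef_iff_dotProduct_mulVec.mpr ⟨?_, fun x hx => ?_⟩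
  · simp [Matrix.IsHermitian]
  · have hxx : 0 < x ⬝ᵥ x := by
      have := Matrix.dotProduct_star_self_pos_iff (R := ℝ) (n := m) (v := x)
      simpa [star] using this.mpr hx
    have : star x ⬝ᵥ (ρ • (1 : Matrix m m ℝ)) *ᵥ x = ρ * (x ⬝ᵥ x) := by
      simp [Matrix.smul_mulVec, dotProduct_smul, star]
    rw [this]
    positivity

theorem ridge_variance_identity
    (n t : ℕ) (ρ : ℝ) (hρ : 0 < ρ)
    (Φ : Matrix (Fin t) (Fin n) ℝ) (u : Fin n → ℝ) :
    IsUnit (Φ * Φᵀ + ρ • (1 : Matrix (Fin t) (Fin t) ℝ)) ∧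
    IsUnit (Φᵀ * Φ + ρ • (1 : Matrix (Fin n) (Fin n) ℝ)) ∧
    (∑ i, u i ^ 2) -
        (Φ *ᵥ u) ⬝ᵥ ((Φ * Φᵀ + ρ • (1 : Matrix (Fin t) (Fin t) ℝ))⁻¹ *ᵥ (Φ *ᵥ u)) =
      ρ * (u ⬝ᵥ ((Φᵀ * Φ + ρ • (1 : Matrix (Fin n) (Fin n) ℝ))⁻¹ *ᵥ u)) := by
  set A := Φ * Φᵀ + ρ • (1 : Matrix (Fin t) (Fin t) ℝ) with hA
  set B := Φᵀ * Φ + ρ • (1 : Matrix (Fin n) (Fin n) ℝ) with hB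
  have hA1 : (Φ * Φᵀ).PosSemidef := by
    simpa using Matrix.posSemidef_self_mul_conjTranspose Φ
  have hB1 : (Φᵀ * Φ).PosSemidef := by
    simpa using Matrix.posSemidef_conjTranspose_mul_self Φ
  have hApd : A.PosDef := Matrix.PosDef.posSemidef_add hA1 (smul_one_posDef hρ)
  have hBpd : B.PosDef := Matrix.PosDef.posSemidef_add hB1 (smul_one_posDef hρ)
  have hAu : IsUnit A := hApd.isUnit
  have hBu : IsUnit B := hBpd.isUnit
  refine ⟨hAu, hBu, ?_⟩
  -- key matrix identity
  have hBΦ : B * Φᵀ = Φᵀ * A := by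
    rw [hA, hB]
    simp [Matrix.add_mul, Matrix.mul_add, Matrix.mul_assoc, Matrix.smul_mul, Matrix.mul_smul]
  have hkey : B * (1 - Φᵀ * A⁻¹ * Φ) = ρ • 1 := by
    have : B * (Φᵀ * A⁻¹ * Φ) = Φᵀ * Φ := by
      calc B * (Φᵀ * A⁻¹ * Φ) = (B * Φᵀ) * A⁻¹ * Φ := by
            simp [Matrix.mul_assoc]
        _ = Φᵀ * (A * A⁻¹) * Φ := by rw [hBΦ]; simp [Matrix.mul_assoc]
        _ = Φᵀ * Φ := by rw [Matrix.mul_nonsing_inv _ (Matrix.isUnit_iff_isUnit_det _ |>.mp hAu)]; simp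
    rw [Matrix.mul_sub, this, hB]
    simp
  have hinv : (1 : Matrix (Fin n) (Fin n) ℝ) - Φᵀ * A⁻¹ * Φ = ρ • B⁻¹ := by
    have := congrArg (fun M => B⁻¹ * M) hkey
    rw [← Matrix.mul_assoc, Matrix.nonsing_inv_mul _ (Matrix.isUnit_iff_isUnit_det _ |>.mp hBu),
      Matrix.one_mul] at this
    rw [this, Matrix.mul_smul, Matrix.mul_one]
  have h1 : (∑ i, u i ^ 2) = u ⬝ᵥ ((1 : Matrix (Fin n) (Fin n) ℝ) *ᵥ u) := by
    simp [dotProduct, pow_two]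
  have h2 : (Φ *ᵥ u) ⬝ᵥ (A⁻¹ *ᵥ (Φ *ᵥ u)) = u ⬝ᵥ ((Φᵀ * A⁻¹ * Φ) *ᵥ u) := by
    rw [← Matrix.mulVec_mulVec, ← Matrix.mulVec_mulVec]
    conv_rhs => rw [Matrix.dotProduct_mulVec, Matrix.vecMul_transpose]
  rw [h1, h2, ← dotProduct_sub, ← Matrix.sub_mulVec, hinv]
  simp [Matrix.smul_mulVec]
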